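/- Let a, b ≥ 1 be integers, let T ⊆ ℂ^b be open, let h₁,…,h_m : Δ^a × T → ℂ be holomorphic, and let t₁ ∈ T. If the holomorphic functions s ↦ h₁(s,t₁), …, s ↦ h_m(s,t₁) are linearly independent over ℂ, then there exists an open neighborhood T' ⊆ T of t₁ such that for every t ∈ T' the functions s ↦ h₁(s,t), …, s ↦ h_m(s,t) are linearly independent over ℂ. -/

import Mathlib

noncomputable section

/-- The open unit polydisc `Δ^ι ⊆ ℂ^ι`. -/
def polydisc (ι : Type*) : Set (ι → ℂ) := {z | ∀ i, ‖z i‖ < 1}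

lemma polydisc_isOpen (ι : Type*) [Fintype ι] : IsOpen (polydisc ι) := by
  have : polydisc ι = ⋂ i, (fun z : ι → ℂ => z i) ⁻¹' Metric.ball 0 1 := by
    ext z; simp [polydisc, Metric.mem_ball, Complex.dist_eq]
  rw [this]
  exact isOpen_iInter_of_finite fun i =>
    (Metric.isOpen_ball).preimage (continuous_apply i)

/-- If a family of functions on a set is "linearly independent" in the pointwise sense,
then there are points of the set at which the evaluation matrix has nonzero determinant. -/
lemma exists_points_det_ne_zero {m : ℕ} {α : Type*} (D : Set α) (f : Fin m → α → ℂ)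
    (hindep : ∀ d : Fin m → ℂ, (∀ s ∈ D, ∑ k, d k * f k s = 0) → ∀ k, d k = 0) :
    ∃ s : Fin m → α, (∀ i, s i ∈ D) ∧
      (Matrix.of fun i k => f k (s i)).det ≠ 0 := by
  classical
  set v : α → (Fin m → ℂ) := fun s k => f k s with hv
  -- Step 1 : the image of `D` under `v` spans `ℂ^m`.
  have hspan : Submodule.span ℂ (v '' D) = ⊤ := by
    by_contra hne
    obtain ⟨φ, hφ0, hφ⟩ := Submodule.exists_dual_map_eq_bot_of_lt_top
      (lt_top_iff_ne_top.2 hne) inferInstance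
    set d : Fin m → ℂ := fun k => φ (Pi.single k 1) with hd
    have key : ∀ x : Fin m → ℂ, φ x = ∑ k, x k * d k := by
      intro x
      conv_lhs => rw [pi_eq_sum_univ x]
      rw [map_sum]
      refine Finset.sum_congr rfl fun k _ => ?_
      rw [map_smul, smul_eq_mul, hd]
      congr 1
      congr 1
      ext j
      rw [Pi.single_apply]
      exact (if_congr eq_comm rfl rfl).symm
    have hdz : ∀ k, d k = 0 := by
      refine hindep d fun s hs => ?_
      have hmem : v s ∈ Submodule.span ℂ (v '' D) :=
        Submodule.subset_span ⟨s, hs, rfl⟩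
      have : φ (v s) = 0 := by
        have := hφ ▸ Submodule.mem_map_of_mem (f := φ) hmem
        simpa using this
      rw [key] at this
      simpa [hv, mul_comm] using this
    apply hφ0
    ext x
    simp [key, hdz]
  -- Step 2 : extract a basis from the spanning set.
  obtain ⟨B, hBsub, hBspan, hBli⟩ := exists_linearIndependent ℂ (v '' D)
  rw [hspan] at hBspan
  let bas : Module.Basis B ℂ (Fin m → ℂ) := Module.Basis.mk hBli (by rw [Subtype.range_coe, hBspan])
  haveI : Fintype B := FiniteDimensional.fintypeBasisIndex bas
  have hcard : Fintype.card B = m := by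
    have := Module.finrank_eq_card_basis bas
    rw [Module.finrank_fin_fun] at this
    omega
  let e : Fin m ≃ B := (Fintype.equivFinOfCardEq hcard).symm
  have hpre : ∀ i : Fin m, ∃ s, s ∈ D ∧ v s = (e i : Fin m → ℂ) := by
    intro i
    obtain ⟨s, hs, hvs⟩ := hBsub (e i).2
    exact ⟨s, hs, hvs⟩
  choose s hsD hsv using hpre
  refine ⟨s, hsD, ?_⟩
  have hli : LinearIndependent ℂ (fun i : Fin m => v (s i)) := by
    have : (fun i : Fin m => v (s i)) = (fun x : B => (x : Fin m → ℂ)) ∘ e := by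
      funext i; simp [hsv i]
    rw [this]
    exact hBli.comp e e.injective
  have : LinearIndependent ℂ (fun i => (Matrix.of fun i k => f k (s i)) i) := by
    exact hli
  have := Matrix.linearIndependent_rows_iff_isUnit.1 this
  exact ((Matrix.isUnit_iff_isUnit_det _).1 this).ne_zero

/-- Let `h₁,…,h_m` be holomorphic on `Δ^a × T` with `T ⊆ ℂ^b` open,
and let `t₁ ∈ T`.  If `s ↦ h₁(s,t₁), …, s ↦ h_m(s,t₁)` are linearly independent over
`ℂ`, then the same holds for every `t` in some open neighborhood `T' ⊆ T` of `t₁`. -/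
theorem linear_independence_is_open_in_parameter
    (a b m : ℕ) (ha : 1 ≤ a) (hb : 1 ≤ b)
    (T : Set (Fin b → ℂ)) (hT : IsOpen T)
    (h : Fin m → (Fin a → ℂ) → (Fin b → ℂ) → ℂ)
    (hhol : ∀ k, DifferentiableOn ℂ
      (fun p : (Fin a → ℂ) × (Fin b → ℂ) => h k p.1 p.2) (polydisc (Fin a) ×ˢ T))
    (t₁ : Fin b → ℂ) (ht₁ : t₁ ∈ T)
    (hindep : ∀ d : Fin m → ℂ,
      (∀ s ∈ polydisc (Fin a), ∑ k, d k * h k s t₁ = 0) → ∀ k, d k = 0) :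
    ∃ T' : Set (Fin b → ℂ), T' ⊆ T ∧ IsOpen T' ∧ t₁ ∈ T' ∧
      ∀ t ∈ T', ∀ d : Fin m → ℂ,
        (∀ s ∈ polydisc (Fin a), ∑ k, d k * h k s t = 0) → ∀ k, d k = 0 := by
  classical
  obtain ⟨s, hsD, hdet⟩ := exists_points_det_ne_zero (polydisc (Fin a))
    (fun k z => h k z t₁) hindep
  -- the determinant function of the parameter
  set g : (Fin b → ℂ) → ℂ :=
    fun t => (Matrix.of fun i k => h k (s i) t).det with hg
  -- each entry is continuous on T
  have hent : ∀ (k : Fin m) (i : Fin m), ContinuousOn (fun t => h k (s i) t) T := by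
    intro k i
    have hc : ContinuousOn (fun p : (Fin a → ℂ) × (Fin b → ℂ) => h k p.1 p.2)
        (polydisc (Fin a) ×ˢ T) := (hhol k).continuousOn
    have hmap : Set.MapsTo (fun t : Fin b → ℂ => (s i, t)) T
        (polydisc (Fin a) ×ˢ T) := fun t ht => ⟨hsD i, ht⟩
    exact hc.comp ((continuous_const.prodMk continuous_id).continuousOn) hmap
  have hgcont : ContinuousOn g T := by
    have hM : ContinuousOn (fun t => (Matrix.of fun i k => h k (s i) t :
        Matrix (Fin m) (Fin m) ℂ)) T := by
      apply continuousOn_pi.2; intro i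
      apply continuousOn_pi.2; intro k
      exact hent k i
    exact (Continuous.matrix_det continuous_id).comp_continuousOn hM
  refine ⟨T ∩ g ⁻¹' {(0 : ℂ)}ᶜ, Set.inter_subset_left,
    hgcont.isOpen_inter_preimage hT isOpen_compl_singleton,
    ⟨ht₁, by simpa [hg] using hdet⟩, ?_⟩
  rintro t ⟨htT, htg⟩ d hd
  have hmul : (Matrix.of fun i k => h k (s i) t).mulVec d = 0 := by
    funext i
    simpa [Matrix.mulVec, dotProduct, mul_comm] using hd (s i) (hsD i)
  have hdz : d = 0 := Matrix.eq_zero_of_mulVec_eq_zero (by simpa [hg] using htg) hmul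
  intro k; rw [hdz]; rfl
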